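/- Fix integers k ≥ 3 and l ≥ 1. For x ∈ ℂ^l define the orbit set O_{k,l}(x) = { (ζ₁ · x_{σ(1)}, …, ζ_l · x_{σ(l)}) : ζ₁, …, ζ_l ∈ ℂ with ζ_i^k = 1, σ a permutation of {1, …, l} }. If x ∈ ℂ^l is nonzero and O_{k,l}(x) has cardinality exactly k · l, then exactly one coordinate of x is nonzero. -/

import Mathlib

open Finset

/-- For `k ≥ 3`, `l ≥ 1`: if `x ∈ ℂ^l` is nonzero and its orbit under the group
generated by rotations of each coordinate by `k`-th roots of unity and by permutations
of the coordinates has cardinality exactly `k · l`, then exactly one coordinate of `x`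
is nonzero. -/
theorem minimal_orbit_unique_nonzero_coord (k l : ℕ) (hk : 3 ≤ k) (hl : 1 ≤ l)
    (x : Fin l → ℂ) (hx : x ≠ 0)
    (hcard : ({v | ∃ (ζ : Fin l → ℂ) (σ : Equiv.Perm (Fin l)),
        (∀ i, ζ i ^ k = 1) ∧ ∀ i, v i = ζ i * x (σ i)} : Set (Fin l → ℂ)).ncard = k * l) :
    ∃! i : Fin l, x i ≠ 0 := by
  classical
  set O : Set (Fin l → ℂ) := {v | ∃ (ζ : Fin l → ℂ) (σ : Equiv.Perm (Fin l)),
      (∀ i, ζ i ^ k = 1) ∧ ∀ i, v i = ζ i * x (σ i)} with hOdef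
  by_cases huniq : ∃! i : Fin l, x i ≠ 0
  · exact huniq
  exfalso
  have hk0 : 0 < k := by omega
  -- two distinct nonzero coordinates
  obtain ⟨a, ha⟩ : ∃ i, x i ≠ 0 := by
    by_contra h; push_neg at h; exact hx (funext fun i => by simpa using h i)
  obtain ⟨b, hb, hba⟩ : ∃ b, x b ≠ 0 ∧ b ≠ a := by
    by_contra h; push_neg at h
    exact huniq ⟨a, ha, h⟩
  -- support
  set S : Finset (Fin l) := Finset.univ.filter (fun i => x i ≠ 0) with hSdef
  have haS : a ∈ S := by simp [hSdef, ha]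
  have hbS : b ∈ S := by simp [hSdef, hb]
  have hs2 : 2 ≤ S.card := Finset.one_lt_card.mpr ⟨a, haS, b, hbS, (Ne.symm hba)⟩
  have hsl : S.card ≤ l := by simpa using Finset.card_le_card (Finset.subset_univ S)
  -- the orbit is finite
  have hfin : O.Finite := by
    by_contra h
    rw [Set.Infinite.ncard h] at hcard
    exact Nat.mul_ne_zero (by omega) (by omega) hcard.symm
  -- roots of unity
  set R : Finset ℂ := Polynomial.nthRootsFinset k (1 : ℂ) with hRdef
  have hRmem : ∀ ζ : ℂ, ζ ∈ R ↔ ζ ^ k = 1 := fun ζ => Polynomial.mem_nthRootsFinset hk0 1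
  have hRcard : R.card = k :=
    (Complex.isPrimitiveRoot_exp k (by omega)).card_nthRootsFinset
  have h1R : (1 : ℂ) ∈ R := (hRmem 1).mpr (one_pow k)
  -- the three families
  set f1 : ℂ → (Fin l → ℂ) := fun ζ i => if i = a then ζ * x a else x i with hf1
  set f2 : ℂ × ℂ × Fin l → (Fin l → ℂ) := fun p i =>
    if i = a then p.1 * x a else if i = p.2.2 then p.2.1 * x p.2.2 else x i with hf2
  set f3 : ℂ × ℂ × Fin l → (Fin l → ℂ) := fun p i =>
    if i = a then p.1 * x a else if i = p.2.2 then p.2.1 * x b else if i = b then 0 else x i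
    with hf3
  set A1 : Finset (Fin l → ℂ) := R.image f1 with hA1
  set A2 : Finset (Fin l → ℂ) := ((R ×ˢ ((R.erase 1) ×ˢ (S.erase a))).image f2) with hA2
  set A3 : Finset (Fin l → ℂ) := ((R ×ˢ (R ×ˢ Sᶜ)).image f3) with hA3
  -- membership in the orbit
  have hm1 : ∀ ζ ∈ R, f1 ζ ∈ O := by
    intro ζ hζ
    refine ⟨fun i => if i = a then ζ else 1, Equiv.refl _, fun i => ?_, fun i => ?_⟩
    · by_cases h : i = a <;> simp [h, (hRmem ζ).mp hζ]
    · by_cases h : i = a <;> simp [hf1, h]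
  have hm2 : ∀ p ∈ R ×ˢ ((R.erase 1) ×ˢ (S.erase a)), f2 p ∈ O := by
    rintro ⟨ζ, η, d⟩ hp
    simp only [Finset.mem_product, Finset.mem_erase] at hp
    obtain ⟨hζ, ⟨hη1, hη⟩, hda, hdS⟩ := hp
    refine ⟨fun i => if i = a then ζ else if i = d then η else 1, Equiv.refl _,
      fun i => ?_, fun i => ?_⟩
    · by_cases h : i = a <;> by_cases h' : i = d <;>
        simp [h, h', (hRmem ζ).mp hζ, (hRmem η).mp hη]
    · by_cases h : i = a <;> by_cases h' : i = d <;> simp [hf2, h, h', hda]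
  have hm3 : ∀ p ∈ R ×ˢ (R ×ˢ Sᶜ), f3 p ∈ O := by
    rintro ⟨ζ, η, c⟩ hp
    simp only [Finset.mem_product, Finset.mem_compl] at hp
    obtain ⟨hζ, hη, hcS⟩ := hp
    have hxc : x c = 0 := by
      by_contra h; exact hcS (by simp [hSdef, h])
    have hca : c ≠ a := fun h => hcS (h ▸ haS)
    have hcb : c ≠ b := fun h => hcS (h ▸ hbS)
    refine ⟨fun i => if i = a then ζ else if i = c then η else 1, Equiv.swap b c,
      fun i => ?_, fun i => ?_⟩
    · by_cases h : i = a <;> by_cases h' : i = c <;>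
        simp [h, h', (hRmem ζ).mp hζ, (hRmem η).mp hη]
    · rcases eq_or_ne i a with h | h
      · subst h
        simp [hf3, Equiv.swap_apply_of_ne_of_ne (Ne.symm hba) (fun h => hca h.symm)]
      rcases eq_or_ne i c with h' | h'
      · subst h'
        simp [hf3, h, Equiv.swap_apply_right]
      rcases eq_or_ne i b with h'' | h''
      · subst h''
        simp [hf3, h, h', Equiv.swap_apply_left, hxc]
      · simp [hf3, h, h', h'', Equiv.swap_apply_of_ne_of_ne h'' h']
  -- injectivity / cardinalities
  have hc1 : A1.card = k := by
    rw [hA1, Finset.card_image_of_injOn, hRcard]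
    intro ζ _ ζ' _ h
    have := congrFun h a
    simp only [hf1, if_pos rfl] at this
    exact mul_right_cancel₀ ha this
  have hc2 : A2.card = k * ((k - 1) * (S.card - 1)) := by
    rw [hA2, Finset.card_image_of_injOn]
    · simp [hRcard, h1R, Finset.card_erase_of_mem, haS]
    rintro ⟨ζ, η, d⟩ hp ⟨ζ', η', d'⟩ hp' h
    simp only [Finset.mem_coe, Finset.mem_product, Finset.mem_erase, hSdef,
      Finset.mem_filter] at hp hp'
    obtain ⟨hζ, ⟨hη1, -⟩, hda, -, hxd⟩ := hp
    obtain ⟨hζ', ⟨hη'1, -⟩, hd'a, -, hxd'⟩ := hp'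
    have hζeq : ζ = ζ' := by
      have := congrFun h a
      simp only [hf2, if_pos rfl] at this
      exact mul_right_cancel₀ ha this
    have hdd : d = d' := by
      by_contra hne
      have h1 := congrFun h d
      simp only [hf2, if_neg hda, if_pos rfl, if_neg hne] at h1
      refine hη1 (mul_right_cancel₀ hxd ?_)
      rw [one_mul]; exact h1
    subst hdd
    have h2 := congrFun h d
    simp only [hf2, if_neg hda, if_pos rfl] at h2
    have : η = η' := mul_right_cancel₀ hxd h2
    simp [hζeq, this]
  have hc3 : A3.card = k * (k * (l - S.card)) := by
    rw [hA3, Finset.card_image_of_injOn]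
    · simp [hRcard, Finset.card_compl]
    rintro ⟨ζ, η, c⟩ hp ⟨ζ', η', c'⟩ hp' h
    simp only [Finset.mem_coe, Finset.mem_product, Finset.mem_compl] at hp hp'
    obtain ⟨hζ, hη, hcS⟩ := hp
    obtain ⟨hζ', hη', hc'S⟩ := hp'
    have hxc : x c = 0 := by by_contra hh; exact hcS (by simp [hSdef, hh])
    have hca : c ≠ a := fun hh => hcS (hh ▸ haS)
    have hc'a : c' ≠ a := fun hh => hc'S (hh ▸ haS)
    have hζeq : ζ = ζ' := by
      have := congrFun h a
      simp only [hf3, if_pos rfl] at this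
      exact mul_right_cancel₀ ha this
    have hcc : c = c' := by
      by_contra hne
      have hcb : c ≠ b := fun hh => hcS (hh ▸ hbS)
      have h1 := congrFun h c
      simp only [hf3, if_neg hca, if_pos rfl, if_neg hne, if_neg hcb, if_true] at h1
      rw [hxc] at h1
      rcases mul_eq_zero.mp h1 with h0 | h0
      · have hηk := (hRmem η).mp hη
        rw [h0] at hηk; simp [zero_pow (by omega : k ≠ 0)] at hηk
      · exact hb h0
    subst hcc
    have h2 := congrFun h c
    simp only [hf3, if_neg hca, if_pos rfl] at h2
    have : η = η' := mul_right_cancel₀ hb h2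
    simp [hζeq, this]
  -- disjointness
  have hd12 : Disjoint A1 A2 := by
    rw [Finset.disjoint_left]
    rintro v hv1 hv2
    simp only [hA1, hA2, Finset.mem_image] at hv1 hv2
    obtain ⟨ζ, -, rfl⟩ := hv1
    obtain ⟨⟨ζ', η, d⟩, hp, hfeq⟩ := hv2
    simp only [Finset.mem_product, Finset.mem_erase, hSdef, Finset.mem_filter] at hp
    obtain ⟨-, ⟨hη1, -⟩, hda, -, hxd⟩ := hp
    have h1 : η * x d = x d := by
      have := congrFun hfeq d
      simpa [hf1, hf2, hda] using this
    refine hη1 (mul_right_cancel₀ hxd ?_)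
    rw [one_mul]; exact h1
  have hd3 : Disjoint (A1 ∪ A2) A3 := by
    rw [Finset.disjoint_left]
    rintro v hv12 hv3
    simp only [hA3, Finset.mem_image] at hv3
    obtain ⟨⟨ζ, η, c⟩, hp, rfl⟩ := hv3
    simp only [Finset.mem_product, Finset.mem_compl] at hp
    obtain ⟨-, -, hcS⟩ := hp
    have hcb : c ≠ b := fun hh => hcS (hh ▸ hbS)
    have hab' : ¬ (b = a) := hba
    have hbc' : ¬ (b = c) := Ne.symm hcb
    have hvb : f3 (ζ, η, c) b = 0 := by
      simp [hf3, hab', hbc']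
    rw [Finset.mem_union] at hv12
    rcases hv12 with hv | hv
    · simp only [hA1, Finset.mem_image] at hv
      obtain ⟨ζ', -, hfeq⟩ := hv
      have := congrFun hfeq b
      rw [hvb] at this
      simp only [hf1, hab', if_false] at this
      exact hb this
    · simp only [hA2, Finset.mem_image] at hv
      obtain ⟨⟨ζ', η', d⟩, hp', hfeq⟩ := hv
      simp only [Finset.mem_product, Finset.mem_erase, hSdef, Finset.mem_filter] at hp'
      obtain ⟨-, ⟨hη1, hη'⟩, hda, -, hxd⟩ := hp'
      have := congrFun hfeq b
      rw [hvb] at this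
      rcases eq_or_ne b d with hbd | hbd
      · subst hbd
        simp only [hf2, hab', if_false, if_pos rfl] at this
        have hη'k : η' ^ k = 1 := (hRmem η').mp hη'
        rcases mul_eq_zero.mp this with h0 | h0
        · rw [h0] at hη'k; simp [zero_pow (by omega : k ≠ 0)] at hη'k
        · exact hb h0
      · simp only [hf2, hab', hbd, if_false] at this
        exact hb this
  -- the union sits inside the orbit
  have hsub : A1 ∪ A2 ∪ A3 ⊆ hfin.toFinset := by
    intro v hv
    rw [Set.Finite.mem_toFinset]
    simp only [Finset.mem_union, hA1, hA2, hA3, Finset.mem_image] at hv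
    rcases hv with (⟨ζ, hζ, rfl⟩ | ⟨p, hp, rfl⟩) | ⟨p, hp, rfl⟩
    · exact hm1 ζ hζ
    · exact hm2 p hp
    · exact hm3 p hp
  -- counting
  have hcount : A1.card + (k * ((k - 1) * (S.card - 1)) + k * (k * (l - S.card))) ≤ k * l := by
    calc A1.card + (k * ((k - 1) * (S.card - 1)) + k * (k * (l - S.card)))
        = (A1 ∪ A2 ∪ A3).card := by
          rw [Finset.card_union_of_disjoint hd3, Finset.card_union_of_disjoint hd12,
            hc2, hc3, add_assoc]
      _ ≤ hfin.toFinset.card := Finset.card_le_card hsub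
      _ = O.ncard := (Set.ncard_eq_toFinset_card O hfin).symm
      _ = k * l := hcard
  rw [hc1] at hcount
  -- arithmetic contradiction
  obtain ⟨k', rfl⟩ : ∃ k', k = k' + 3 := ⟨k - 3, by omega⟩
  obtain ⟨s', hs'⟩ : ∃ s', S.card = s' + 2 := ⟨S.card - 2, by omega⟩
  obtain ⟨t, ht⟩ : ∃ t, l = S.card + t := ⟨l - S.card, by omega⟩
  rw [hs'] at ht
  rw [hs', ht] at hcount
  have e1 : k' + 3 - 1 = k' + 2 := by omega
  have e2 : s' + 2 - 1 = s' + 1 := by omega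
  have e3 : s' + 2 + t - (s' + 2) = t := by omega
  rw [e1, e2, e3] at hcount
  have hc' : (k' + 3) * (1 + (k' + 2) * (s' + 1) + (k' + 3) * t) ≤ (k' + 3) * (s' + 2 + t) := by
    calc (k' + 3) * (1 + (k' + 2) * (s' + 1) + (k' + 3) * t)
        = k' + 3 + ((k' + 3) * ((k' + 2) * (s' + 1)) + (k' + 3) * ((k' + 3) * t)) := by ring
      _ ≤ (k' + 3) * (s' + 2 + t) := hcount
  have hmain : 1 + (k' + 2) * (s' + 1) + (k' + 3) * t ≤ s' + 2 + t :=
    Nat.le_of_mul_le_mul_left hc' (by omega)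
  have hP : s' + 2 ≤ (k' + 2) * (s' + 1) := by nlinarith
  have hQ : t ≤ (k' + 3) * t := Nat.le_mul_of_pos_left t (by omega)
  linarith
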